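/- Suppose a1 < a2 < ... < an are odd natural numbers with P(a1,...,an) = 1/an. Then the set {x ∈ [0,2π] : all cos(ai x) have the same strict sign} equals [0, π/(2an)) ∪ (π − π/(2an), π + π/(2an)) ∪ (2π − π/(2an), 2π]. -/

import Mathlib

open MeasureTheory Real Set

private lemma cos_odd_nat_mul_pi_add {m : ℕ} (hm : Odd m) (t : ℝ) :
    Real.cos (m * π + t) = -Real.cos t := by
  obtain ⟨k, hk⟩ := hm
  have h : (m : ℝ) * π + t = (t + π) + k * (2 * π) := by
    subst hk; push_cast; ring
  rw [h, Real.cos_add_nat_mul_two_pi, Real.cos_add_pi]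

private lemma cos_nat_mul_pi_add_pi_div_two (m : ℕ) :
    Real.cos (m * π + π / 2) = 0 := by
  rw [Real.cos_add, Real.cos_pi_div_two, Real.sin_pi_div_two, Real.sin_nat_mul_pi]; ring

private lemma cos_nat_mul_pi_sub_pi_div_two (m : ℕ) :
    Real.cos (m * π - π / 2) = 0 := by
  rw [Real.cos_sub, Real.cos_pi_div_two, Real.sin_pi_div_two, Real.sin_nat_mul_pi]; ring

/-- The cosine sign correlation: the normalized measure of the set of `x ∈ [0, 2π]`
where all `cos (aᵢ x)` are positive or all are negative. -/
noncomputable def cosP (n : ℕ) (a : Fin n → ℕ) : ℝ :=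
  (volume {x : ℝ | x ∈ Icc 0 (2 * π) ∧
    ((∀ i, 0 < Real.cos (a i * x)) ∨ (∀ i, Real.cos (a i * x) < 0))}).toReal / (2 * π)

theorem stmt_5 (n : ℕ) (a : Fin (n + 1) → ℕ) (hmono : StrictMono a)
    (hodd : ∀ i, Odd (a i)) (hP : cosP (n + 1) a = 1 / (a (Fin.last n) : ℝ)) :
    {x : ℝ | x ∈ Icc 0 (2 * π) ∧
        ((∀ i, 0 < Real.cos (a i * x)) ∨ (∀ i, Real.cos (a i * x) < 0))} =
      Ico 0 (π / (2 * (a (Fin.last n) : ℝ))) ∪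
        Ioo (π - π / (2 * (a (Fin.last n) : ℝ))) (π + π / (2 * (a (Fin.last n) : ℝ))) ∪
        Ioc (2 * π - π / (2 * (a (Fin.last n) : ℝ))) (2 * π) := by
  have hπ := Real.pi_pos
  set A : ℕ := a (Fin.last n) with hAdef
  have hApos : 0 < A := (hodd (Fin.last n)).pos
  have hAr : (1 : ℝ) ≤ (A : ℝ) := by exact_mod_cast hApos
  set δ : ℝ := π / (2 * (A : ℝ)) with hδdef
  have hδpos : 0 < δ := by positivity
  have hδle : δ ≤ π / 2 := by
    rw [hδdef]
    apply div_le_div_of_nonneg_left hπ.le (by norm_num) (by linarith)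
  have hAδ : (A : ℝ) * δ = π / 2 := by
    rw [hδdef]; field_simp
  have hmul : ∀ i, ((a i : ℝ)) * δ ≤ π / 2 := by
    intro i
    have hle : (a i : ℝ) ≤ (A : ℝ) := by
      exact_mod_cast hmono.monotone (Fin.le_last i)
    calc (a i : ℝ) * δ ≤ (A : ℝ) * δ := by
          exact mul_le_mul_of_nonneg_right hle hδpos.le
      _ = π / 2 := hAδ
  have hapos : ∀ i, (0 : ℝ) < (a i : ℝ) := by
    intro i; exact_mod_cast (hodd i).pos
  set S : Set ℝ := {x : ℝ | x ∈ Icc 0 (2 * π) ∧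
      ((∀ i, 0 < Real.cos (a i * x)) ∨ (∀ i, Real.cos (a i * x) < 0))} with hSdef
  set I : Set ℝ := Ico 0 δ ∪ Ioo (π - δ) (π + δ) ∪ Ioc (2 * π - δ) (2 * π) with hIdef
  -- inclusion I ⊆ S
  have hIS : I ⊆ S := by
    rintro x ((hx | hx) | hx)
    · refine ⟨⟨hx.1, by linarith [hx.2]⟩, Or.inl fun i => ?_⟩
      apply Real.cos_pos_of_mem_Ioo
      constructor
      · have := mul_nonneg (hapos i).le hx.1
        linarith
      · have h1 := mul_lt_mul_of_pos_left hx.2 (hapos i)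
        have h2 := hmul i
        linarith
    · refine ⟨⟨by linarith [hx.1], by linarith [hx.2]⟩, Or.inr fun i => ?_⟩
      have heq : (a i : ℝ) * x = (a i : ℝ) * π + (a i : ℝ) * (x - π) := by ring
      rw [heq, cos_odd_nat_mul_pi_add (hodd i)]
      have h1 : (a i : ℝ) * (x - π) < (a i : ℝ) * δ :=
        mul_lt_mul_of_pos_left (by linarith [hx.2]) (hapos i)
      have h2 : (a i : ℝ) * (-δ) < (a i : ℝ) * (x - π) :=
        mul_lt_mul_of_pos_left (by linarith [hx.1]) (hapos i)
      have h3 := hmul i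
      have : 0 < Real.cos ((a i : ℝ) * (x - π)) := by
        apply Real.cos_pos_of_mem_Ioo
        constructor <;> nlinarith
      linarith
    · refine ⟨⟨by linarith [hx.1], hx.2⟩, Or.inl fun i => ?_⟩
      have heq : (a i : ℝ) * x = (a i : ℝ) * (x - 2 * π) + (a i : ℝ) * (2 * π) := by ring
      rw [heq, Real.cos_add_nat_mul_two_pi]
      have h2 : (a i : ℝ) * (-δ) < (a i : ℝ) * (x - 2 * π) :=
        mul_lt_mul_of_pos_left (by linarith [hx.1]) (hapos i)
      have h1 : (a i : ℝ) * (x - 2 * π) ≤ 0 :=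
        mul_nonpos_of_nonneg_of_nonpos (hapos i).le (by linarith [hx.2])
      have h3 := hmul i
      apply Real.cos_pos_of_mem_Ioo
      constructor <;> nlinarith
  -- openness / measurability
  set U : Set ℝ := {x : ℝ | (∀ i, 0 < Real.cos (a i * x)) ∨ (∀ i, Real.cos (a i * x) < 0)}
    with hUdef
  have hcont : ∀ i : Fin (n + 1), Continuous fun x : ℝ => Real.cos ((a i : ℝ) * x) :=
    fun i => Real.continuous_cos.comp (continuous_const.mul continuous_id)
  have hUopen : IsOpen U := by
    have h1 : IsOpen {x : ℝ | ∀ i, 0 < Real.cos (a i * x)} := by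
      have : {x : ℝ | ∀ i, 0 < Real.cos (a i * x)} =
          ⋂ i, {x : ℝ | 0 < Real.cos (a i * x)} := by ext x; simp
      rw [this]
      exact isOpen_iInter_of_finite fun i => isOpen_lt continuous_const (hcont i)
    have h2 : IsOpen {x : ℝ | ∀ i, Real.cos (a i * x) < 0} := by
      have : {x : ℝ | ∀ i, Real.cos (a i * x) < 0} =
          ⋂ i, {x : ℝ | Real.cos (a i * x) < 0} := by ext x; simp
      rw [this]
      exact isOpen_iInter_of_finite fun i => isOpen_lt (hcont i) continuous_const
    have : U = {x : ℝ | ∀ i, 0 < Real.cos (a i * x)} ∪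
        {x : ℝ | ∀ i, Real.cos (a i * x) < 0} := by ext x; simp [hUdef]
    rw [this]; exact h1.union h2
  have hSU : S = Icc 0 (2 * π) ∩ U := by
    ext x; simp [hSdef, hUdef, Set.mem_inter_iff, and_comm]
  have hSmeas : MeasurableSet S := by
    rw [hSU]; exact measurableSet_Icc.inter hUopen.measurableSet
  have hImeas : MeasurableSet I :=
    (measurableSet_Ico.union measurableSet_Ioo).union measurableSet_Ioc
  -- volume of I
  have hd1 : Disjoint (Ico (0:ℝ) δ) (Ioo (π - δ) (π + δ)) := by
    rw [Set.disjoint_left]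
    rintro x ⟨_, h2⟩ ⟨h3, _⟩; linarith
  have hd2 : Disjoint (Ico (0:ℝ) δ ∪ Ioo (π - δ) (π + δ)) (Ioc (2 * π - δ) (2 * π)) := by
    rw [Set.disjoint_left]
    rintro x (⟨_, h2⟩ | ⟨_, h2⟩) ⟨h3, _⟩ <;> linarith
  have hvolI : volume I = ENNReal.ofReal (4 * δ) := by
    rw [hIdef, measure_union hd2 measurableSet_Ioc, measure_union hd1 measurableSet_Ioo,
      Real.volume_Ico, Real.volume_Ioo, Real.volume_Ioc,
      ← ENNReal.ofReal_add (by linarith) (by linarith),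
      ← ENNReal.ofReal_add (by linarith) (by linarith)]
    congr 1; ring
  -- volume of S from hP
  have hSsub : S ⊆ Icc 0 (2 * π) := fun x hx => hx.1
  have hSfin : volume S ≠ ⊤ := by
    refine ne_top_of_le_ne_top ?_ (measure_mono hSsub)
    rw [Real.volume_Icc]; exact ENNReal.ofReal_ne_top
  have hP' : (volume S).toReal = 4 * δ := by
    have hP2 : (volume S).toReal / (2 * π) = 1 / (A : ℝ) := hP
    rw [div_eq_div_iff (by positivity) (by positivity)] at hP2
    have hA0 : (A : ℝ) ≠ 0 := by positivity
    rw [hδdef]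
    field_simp
    nlinarith [hP2]
  have hvolS : volume S = ENNReal.ofReal (4 * δ) := by
    rw [← hP', ENNReal.ofReal_toReal hSfin]
  have hdiff : volume (S \ I) = 0 := by
    rw [measure_diff hIS hImeas.nullMeasurableSet
      (by rw [hvolI]; exact ENNReal.ofReal_ne_top), hvolS, hvolI, tsub_self]
  -- the closed hull J
  set J : Set ℝ := Icc 0 δ ∪ Icc (π - δ) (π + δ) ∪ Icc (2 * π - δ) (2 * π) with hJdef
  have hIJ : I ⊆ J := by
    apply Set.union_subset_union
    exact Set.union_subset_union Set.Ico_subset_Icc_self Set.Ioo_subset_Icc_self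
    exact Set.Ioc_subset_Icc_self
  have hJclosed : IsClosed J :=
    ((isClosed_Icc.union isClosed_Icc).union isClosed_Icc)
  -- reverse inclusion
  have hSI : S ⊆ I := by
    intro x hx
    by_contra hxI
    have hcos0 : Real.cos ((A : ℝ) * x) ≠ 0 := by
      rcases hx.2 with h | h
      · exact ne_of_gt (h (Fin.last n))
      · exact ne_of_lt (h (Fin.last n))
    simp only [hIdef, Set.mem_union, not_or] at hxI
    obtain ⟨⟨hx1, hx2⟩, hx3⟩ := hxI
    have hxJ : x ∉ J := by
      rintro ((hJ | hJ) | hJ)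
      · have hxe : x = δ := by
          rcases lt_or_ge x δ with h | h
          · exact absurd ⟨hJ.1, h⟩ hx1
          · linarith [hJ.2]
        apply hcos0
        rw [hxe, hAδ, Real.cos_pi_div_two]
      · have hxe : x = π - δ ∨ x = π + δ := by
          rcases lt_or_ge (π - δ) x with h | h
          · rcases lt_or_ge x (π + δ) with h' | h'
            · exact absurd ⟨h, h'⟩ hx2
            · right; linarith [hJ.2]
          · left; linarith [hJ.1]
        apply hcos0
        rcases hxe with h | h
        · have : (A : ℝ) * x = (A : ℝ) * π - π / 2 := by rw [h, mul_sub, hAδ]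
          rw [this]; exact cos_nat_mul_pi_sub_pi_div_two A
        · have : (A : ℝ) * x = (A : ℝ) * π + π / 2 := by rw [h, mul_add, hAδ]
          rw [this]; exact cos_nat_mul_pi_add_pi_div_two A
      · have hxe : x = 2 * π - δ := by
          rcases lt_or_ge (2 * π - δ) x with h | h
          · exact absurd ⟨h, hJ.2⟩ hx3
          · linarith [hJ.1]
        apply hcos0
        have : (A : ℝ) * x = ((2 * A : ℕ) : ℝ) * π - π / 2 := by
          push_cast; rw [hxe, mul_sub, hAδ]; ring
        rw [this]; exact cos_nat_mul_pi_sub_pi_div_two (2 * A)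
    have hxU : x ∈ U := hx.2
    obtain ⟨ε, hε, hball⟩ := Metric.isOpen_iff.mp (hUopen.inter hJclosed.isOpen_compl) x
      ⟨hxU, hxJ⟩
    set ε' : ℝ := min ε π with hε'def
    have hε'pos : 0 < ε' := lt_min hε hπ
    have hε'le : ε' ≤ ε := min_le_left _ _
    set l : ℝ := max 0 (x - ε') with hldef
    set r : ℝ := min (2 * π) (x + ε') with hrdef
    have hx0 : 0 ≤ x := hx.1.1
    have hx2π : x ≤ 2 * π := hx.1.2
    have hlr : l < r := by
      rw [hldef, hrdef]
      simp only [max_lt_iff, lt_min_iff]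
      refine ⟨⟨by linarith, by linarith⟩, ⟨by linarith, by linarith⟩⟩
    have hsub : Ioo l r ⊆ S \ I := by
      intro y hy
      have hyl : x - ε' < y := lt_of_le_of_lt (le_max_right _ _) hy.1
      have hyl0 : 0 ≤ y := le_of_lt (lt_of_le_of_lt (le_max_left _ _) hy.1)
      have hyr : y < x + ε' := lt_of_lt_of_le hy.2 (min_le_right _ _)
      have hyr2 : y ≤ 2 * π := le_of_lt (lt_of_lt_of_le hy.2 (min_le_left _ _))
      have hyball : y ∈ Metric.ball x ε := by
        rw [Metric.mem_ball, Real.dist_eq, abs_lt]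
        constructor <;> linarith
      have hyUJ := hball hyball
      refine ⟨⟨⟨hyl0, hyr2⟩, hyUJ.1⟩, fun hyI => hyUJ.2 (hIJ hyI)⟩
    have hle := measure_mono (μ := volume) hsub
    rw [hdiff] at hle
    have : volume (Ioo l r) = ENNReal.ofReal (r - l) := Real.volume_Ioo
    rw [this] at hle
    have : ENNReal.ofReal (r - l) = 0 := le_antisymm hle zero_le
    rw [ENNReal.ofReal_eq_zero] at this
    linarith
  exact Set.Subset.antisymm hSI hIS
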